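/- Let p > 0. Assume h is convex and non-increasing on (0,∞), and assume V : ℝ → ℝ and W : ℝ → ℝ are convex. Then the one-dimensional p-approximated discrete energy Ẽ_N^p is convex on the convex open set {x ∈ ℝ^N : x₁ < x₂ < ⋯ < x_N}. -/

import Mathlib

open Real Finset

lemma combo_pos {l a b : ℝ} (hl0 : 0 ≤ l) (hl1 : l ≤ 1) (ha : 0 < a) (hb : 0 < b) :
    0 < l * a + (1 - l) * b := by
  rcases eq_or_lt_of_le hl0 with rfl | hl
  · simpa using hb
  · have h1 : 0 < l * a := mul_pos hl ha
    have h2 : 0 ≤ (1 - l) * b := mul_nonneg (by linarith) hb.le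
    linarith

lemma jensen_rpow_neg {q u v θ : ℝ} (hq : 0 < q) (hu : 0 < u) (hv : 0 < v)
    (hθ0 : 0 < θ) (hθ1 : θ < 1) :
    (θ * u + (1 - θ) * v) ^ (-q) ≤ θ * u ^ (-q) + (1 - θ) * v ^ (-q) := by
  have hθ1' : 0 < 1 - θ := by linarith
  set A : ℝ := θ * u ^ (-q) + (1 - θ) * v ^ (-q) with hA
  set B : ℝ := θ * u + (1 - θ) * v with hB
  have hupos : 0 < u ^ (-q) := rpow_pos_of_pos hu _
  have hvpos : 0 < v ^ (-q) := rpow_pos_of_pos hv _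
  have hApos : 0 < A := combo_pos hθ0.le hθ1.le hupos hvpos
  have hBpos : 0 < B := combo_pos hθ0.le hθ1.le hu hv
  set α : ℝ := 1 / (1 + q) with hα
  set β : ℝ := q / (1 + q) with hβ
  have h1q : (0:ℝ) < 1 + q := by linarith
  have hαpos : 0 < α := by positivity
  have hβpos : 0 < β := by positivity
  have hαβ : α + β = 1 := by rw [hα, hβ]; field_simp
  have term : ∀ t : ℝ, 0 < t →
      (t ^ (-q) / A) ^ α * (t / B) ^ β ≤ α * (t ^ (-q) / A) + β * (t / B) :=
    fun t ht => Real.geom_mean_le_arith_mean2_weighted hαpos.le hβpos.le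
      (by positivity) (by positivity) hαβ
  have simp_term : ∀ t : ℝ, 0 < t →
      (t ^ (-q) / A) ^ α * (t / B) ^ β = 1 / (A ^ α * B ^ β) := by
    intro t ht
    have htq : (0:ℝ) ≤ t ^ (-q) := (rpow_pos_of_pos ht _).le
    rw [div_rpow htq hApos.le, div_rpow ht.le hBpos.le, div_mul_div_comm,
      ← Real.rpow_mul ht.le, ← Real.rpow_add ht]
    have hz : -q * α + β = 0 := by rw [hα, hβ]; field_simp; ring
    rw [hz, rpow_zero]
  -- Sum the two instances with weights θ, 1-θ
  have sum_ineq : 1 / (A ^ α * B ^ β) ≤ 1 := by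
    have key := add_le_add (mul_le_mul_of_nonneg_left (term u hu) hθ0.le)
      (mul_le_mul_of_nonneg_left (term v hv) hθ1'.le)
    rw [simp_term u hu, simp_term v hv] at key
    have rhs_eq : θ * (α * (u ^ (-q) / A) + β * (u / B))
          + (1 - θ) * (α * (v ^ (-q) / A) + β * (v / B))
        = α * (A / A) + β * (B / B) := by
      rw [hA, hB]; ring
    rw [rhs_eq, div_self hApos.ne', div_self hBpos.ne'] at key
    have lhs_eq : θ * (1 / (A ^ α * B ^ β)) + (1 - θ) * (1 / (A ^ α * B ^ β))
        = 1 / (A ^ α * B ^ β) := by ring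
    rw [lhs_eq] at key
    linarith
  -- conclude
  have hABpos : 0 < A ^ α * B ^ β := by positivity
  have hge1 : 1 ≤ A ^ α * B ^ β := by
    rw [div_le_one hABpos] at sum_ineq; linarith
  have hpow : (A ^ α * B ^ β) ^ (1 + q) = A * B ^ q := by
    rw [mul_rpow (by positivity) (by positivity), ← Real.rpow_mul hApos.le,
      ← Real.rpow_mul hBpos.le]
    have e1 : α * (1 + q) = 1 := by rw [hα]; field_simp
    have e2 : β * (1 + q) = q := by rw [hβ]; field_simp
    rw [e1, e2, rpow_one]
  have hfin : 1 ≤ A * B ^ q := by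
    calc (1:ℝ) = 1 ^ (1 + q) := (one_rpow _).symm
    _ ≤ (A ^ α * B ^ β) ^ (1 + q) := rpow_le_rpow zero_le_one hge1 h1q.le
    _ = A * B ^ q := hpow
  have hBq : 0 < B ^ q := rpow_pos_of_pos hBpos _
  rw [rpow_neg hBpos.le]
  rw [inv_le_iff_one_le_mul₀ hBq]
  linarith [mul_comm A (B ^ q)]

section
variable {p a b : ℝ}

lemma rpow_p_inv (hp : 0 < p) (ha : 0 < a) : (a ^ p) ^ (1/p) = a := by
  rw [← Real.rpow_mul ha.le, mul_one_div_cancel hp.ne', rpow_one]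

lemma rpow_neg_p_inv (hp : 0 < p) (ha : 0 < a) : (a ^ (-p)) ^ (-(1/p)) = a := by
  rw [← Real.rpow_mul ha.le, neg_mul_neg, mul_one_div_cancel hp.ne', rpow_one]

lemma theta_mem (hp : 0 < p) (ha : 0 < a) (hb : 0 < b) :
    0 < b ^ p / (a ^ p + b ^ p) ∧ b ^ p / (a ^ p + b ^ p) < 1 := by
  have hap : 0 < a ^ p := rpow_pos_of_pos ha _
  have hbp : 0 < b ^ p := rpow_pos_of_pos hb _
  constructor
  · positivity
  · rw [div_lt_one (by positivity)]; linarith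

lemma repr_eq (hp : 0 < p) (ha : 0 < a) (hb : 0 < b) :
    (b ^ p / (a ^ p + b ^ p)) ^ (1 + 1/p) * a
      + (1 - b ^ p / (a ^ p + b ^ p)) ^ (1 + 1/p) * b
      = (a ^ (-p) + b ^ (-p)) ^ (-(1/p)) := by
  have hap : 0 < a ^ p := rpow_pos_of_pos ha _
  have hbp : 0 < b ^ p := rpow_pos_of_pos hb _
  have hS : 0 < a ^ p + b ^ p := by linarith
  have h1θ : 1 - b ^ p / (a ^ p + b ^ p) = a ^ p / (a ^ p + b ^ p) := by
    field_simp
    ring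
  rw [h1θ]
  have hq : 0 < 1/p := by positivity
  have split : ∀ c : ℝ, 0 < c → (c / (a^p+b^p)) ^ (1 + 1/p)
      = (c / (a^p+b^p)) * (c ^ (1/p) / (a^p+b^p) ^ (1/p)) := by
    intro c hc
    rw [rpow_add (by positivity), rpow_one, div_rpow hc.le hS.le]
  rw [split _ hbp, split _ hap]
  -- LHS = a*b/S^{1/p} after simplification
  have hbq : (b ^ p) ^ (1/p) = b := rpow_p_inv hp hb
  have haq : (a ^ p) ^ (1/p) = a := rpow_p_inv hp ha
  rw [hbq, haq]
  -- RHS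
  have hsum : a ^ (-p) + b ^ (-p) = (a^p + b^p) / (a^p * b^p) := by
    rw [rpow_neg ha.le, rpow_neg hb.le]
    field_simp
    ring
  rw [hsum, rpow_neg (by positivity), div_rpow hS.le (by positivity),
    inv_div, mul_rpow hap.le hbp.le, haq, hbq]
  have hSq : 0 < (a^p+b^p) ^ (1/p) := rpow_pos_of_pos hS _
  field_simp
  ring

lemma repr_ineq {θ : ℝ} (hp : 0 < p) (ha : 0 < a) (hb : 0 < b)
    (hθ0 : 0 < θ) (hθ1 : θ < 1) :
    (a ^ (-p) + b ^ (-p)) ^ (-(1/p)) ≤ θ ^ (1 + 1/p) * a + (1 - θ) ^ (1 + 1/p) * b := by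
  have hq : 0 < 1/p := by positivity
  have hθ1' : 0 < 1 - θ := by linarith
  have hc : 0 < a ^ (-p) := rpow_pos_of_pos ha _
  have hd : 0 < b ^ (-p) := rpow_pos_of_pos hb _
  have key := jensen_rpow_neg (q := 1/p) (u := a ^ (-p) / θ) (v := b ^ (-p) / (1 - θ))
    hq (by positivity) (by positivity) hθ0 hθ1
  rw [mul_div_cancel₀ _ hθ0.ne', mul_div_cancel₀ _ hθ1'.ne'] at key
  have e : ∀ c t : ℝ, 0 < c → 0 < t → t * (c ^ (-p) / t) ^ (-(1/p))
      = t ^ (1 + 1/p) * c := by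
    intro c t hc ht
    rw [div_rpow (rpow_pos_of_pos hc _).le ht.le, rpow_neg_p_inv hp hc,
      rpow_neg ht.le, div_eq_mul_inv, inv_inv, rpow_add ht, rpow_one]
    ring
  rw [e a θ ha hθ0, e b (1-θ) hb hθ1'] at key
  exact key

lemma concave_core {p l a₁ b₁ a₂ b₂ : ℝ} (hp : 0 < p) (hl0 : 0 ≤ l) (hl1 : l ≤ 1)
    (ha₁ : 0 < a₁) (hb₁ : 0 < b₁) (ha₂ : 0 < a₂) (hb₂ : 0 < b₂) :
    l * (a₁ ^ (-p) + b₁ ^ (-p)) ^ (-(1/p)) + (1 - l) * (a₂ ^ (-p) + b₂ ^ (-p)) ^ (-(1/p))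
      ≤ ((l * a₁ + (1 - l) * a₂) ^ (-p) + (l * b₁ + (1 - l) * b₂) ^ (-p)) ^ (-(1/p)) := by
  set a : ℝ := l * a₁ + (1 - l) * a₂ with hadef
  set b : ℝ := l * b₁ + (1 - l) * b₂ with hbdef
  have ha : 0 < a := combo_pos hl0 hl1 ha₁ ha₂
  have hb : 0 < b := combo_pos hl0 hl1 hb₁ hb₂
  obtain ⟨hθ0, hθ1⟩ := theta_mem hp ha hb
  set θ : ℝ := b ^ p / (a ^ p + b ^ p) with hθdef
  calc l * (a₁ ^ (-p) + b₁ ^ (-p)) ^ (-(1/p)) + (1 - l) * (a₂ ^ (-p) + b₂ ^ (-p)) ^ (-(1/p))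
      ≤ l * (θ ^ (1 + 1/p) * a₁ + (1 - θ) ^ (1 + 1/p) * b₁)
        + (1 - l) * (θ ^ (1 + 1/p) * a₂ + (1 - θ) ^ (1 + 1/p) * b₂) :=
        add_le_add (mul_le_mul_of_nonneg_left (repr_ineq hp ha₁ hb₁ hθ0 hθ1) hl0)
          (mul_le_mul_of_nonneg_left (repr_ineq hp ha₂ hb₂ hθ0 hθ1) (by linarith))
    _ = θ ^ (1 + 1/p) * a + (1 - θ) ^ (1 + 1/p) * b := by rw [hadef, hbdef]; ring
    _ = (a ^ (-p) + b ^ (-p)) ^ (-(1/p)) := repr_eq hp ha hb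

lemma half_rpow {p c : ℝ} (hc : 0 < c) :
    (c / 2) ^ (-1/p) = 2 ^ (1/p) * c ^ (-(1/p)) := by
  rw [neg_div, div_eq_mul_inv, ← Real.rpow_neg_one 2,
    Real.mul_rpow hc.le (by positivity), ← Real.rpow_mul (by norm_num)]
  rw [neg_one_mul, neg_neg, mul_comm]

lemma concave_core' {p l a₁ b₁ a₂ b₂ : ℝ} (hp : 0 < p) (hl0 : 0 ≤ l) (hl1 : l ≤ 1)
    (ha₁ : 0 < a₁) (hb₁ : 0 < b₁) (ha₂ : 0 < a₂) (hb₂ : 0 < b₂) :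
    l * ((a₁ ^ (-p) + b₁ ^ (-p)) / 2) ^ (-1/p)
      + (1 - l) * ((a₂ ^ (-p) + b₂ ^ (-p)) / 2) ^ (-1/p)
      ≤ (((l * a₁ + (1 - l) * a₂) ^ (-p) + (l * b₁ + (1 - l) * b₂) ^ (-p)) / 2) ^ (-1/p) := by
  have s1 : (0:ℝ) < a₁ ^ (-p) + b₁ ^ (-p) := by positivity
  have s2 : (0:ℝ) < a₂ ^ (-p) + b₂ ^ (-p) := by positivity
  have ha : 0 < l * a₁ + (1 - l) * a₂ := combo_pos hl0 hl1 ha₁ ha₂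
  have hb : 0 < l * b₁ + (1 - l) * b₂ := combo_pos hl0 hl1 hb₁ hb₂
  have s3 : (0:ℝ) < (l * a₁ + (1 - l) * a₂) ^ (-p) + (l * b₁ + (1 - l) * b₂) ^ (-p) := by
    positivity
  rw [half_rpow s1, half_rpow s2, half_rpow s3]
  have k0 : (0:ℝ) ≤ 2 ^ (1/p) := (rpow_pos_of_pos two_pos _).le
  calc l * (2 ^ (1/p) * (a₁ ^ (-p) + b₁ ^ (-p)) ^ (-(1/p)))
        + (1 - l) * (2 ^ (1/p) * (a₂ ^ (-p) + b₂ ^ (-p)) ^ (-(1/p)))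
      = 2 ^ (1/p) * (l * (a₁ ^ (-p) + b₁ ^ (-p)) ^ (-(1/p))
          + (1 - l) * (a₂ ^ (-p) + b₂ ^ (-p)) ^ (-(1/p))) := by ring
    _ ≤ 2 ^ (1/p) * ((l * a₁ + (1 - l) * a₂) ^ (-p)
          + (l * b₁ + (1 - l) * b₂) ^ (-p)) ^ (-(1/p)) :=
        mul_le_mul_of_nonneg_left (concave_core hp hl0 hl1 ha₁ hb₁ ha₂ hb₂) k0

/-- `rᵢᵖ = min_p(Δxᵢ, Δxᵢ₊₁) = ((Δxᵢ^{−p} + Δxᵢ₊₁^{−p})/2)^{−1/p}`, with the boundary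
convention `r₁ᵖ = 2^{1/p} Δx₂` and `r_Nᵖ = 2^{1/p} Δx_N` (coming from
`Δx₁ = Δx_{N+1} = +∞`), for `N = n + 2` particles indexed from `0` to `n+1`. -/
noncomputable def rballp (p : ℝ) (n : ℕ) (x : Fin (n + 2) → ℝ) (i : Fin (n + 2)) : ℝ :=
  if i.val = 0 then (2 : ℝ) ^ (1 / p) * (x 1 - x 0)
  else if i.val = n + 1 then (2 : ℝ) ^ (1 / p) * (x i - x (i - 1))
  else (((x i - x (i - 1)) ^ (-p) + (x (i + 1) - x i) ^ (-p)) / 2) ^ (-1 / p)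

/-- The one-dimensional `p`-approximated discrete energy
`Ẽ_N^p(x) = Σᵢ wᵢ h(rᵢᵖ/wᵢ) + Σᵢ wᵢ V(xᵢ) + (1/2) Σᵢ Σ_{j≠i} wᵢwⱼ W(xᵢ − xⱼ)`,
where `h(λ) = λ H(1/λ)`. -/
noncomputable def discreteEnergyP (p : ℝ) (n : ℕ) (w : Fin (n + 2) → ℝ) (h V W : ℝ → ℝ)
    (x : Fin (n + 2) → ℝ) : ℝ :=
  ∑ i, w i * h (rballp p n x i / w i) + ∑ i, w i * V (x i) +
    (1 / 2) * ∑ i, ∑ j ∈ Finset.univ.erase i, w i * w j * W (x i - x j)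

section fin
variable {n : ℕ}

lemma fin01 : (0 : Fin (n + 2)) < 1 := by
  rw [Fin.lt_def]; simp

lemma fin_sub_one_lt {i : Fin (n + 2)} (hi : i.val ≠ 0) : i - 1 < i := by
  rw [Fin.lt_def, Fin.coe_sub_one, if_neg (fun h => hi (by simp [h]))]
  omega

lemma fin_lt_add_one {i : Fin (n + 2)} (hi : i.val ≠ n + 1) : i < i + 1 := by
  rw [Fin.lt_def, Fin.val_add_one, if_neg (fun h => hi (by simp [h, Fin.last]))]
  omega

lemma rballp_pos {p : ℝ} (hp : 0 < p) {x : Fin (n + 2) → ℝ} (hx : StrictMono x)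
    (i : Fin (n + 2)) : 0 < rballp p n x i := by
  unfold rballp
  split_ifs with h1 h2
  · exact mul_pos (rpow_pos_of_pos two_pos _) (sub_pos.2 (hx fin01))
  · exact mul_pos (rpow_pos_of_pos two_pos _) (sub_pos.2 (hx (fin_sub_one_lt h1)))
  · have d1 : 0 < x i - x (i - 1) := sub_pos.2 (hx (fin_sub_one_lt h1))
    have d2 : 0 < x (i + 1) - x i := sub_pos.2 (hx (fin_lt_add_one h2))
    positivity

lemma rballp_combo {p : ℝ} (hp : 0 < p) {x y : Fin (n + 2) → ℝ}
    (hx : StrictMono x) (hy : StrictMono y) {l : ℝ} (hl0 : 0 ≤ l) (hl1 : l ≤ 1)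
    (i : Fin (n + 2)) :
    l * rballp p n x i + (1 - l) * rballp p n y i
      ≤ rballp p n (fun j => l * x j + (1 - l) * y j) i := by
  unfold rballp
  split_ifs with h1 h2
  · exact le_of_eq (by ring)
  · exact le_of_eq (by ring)
  · have d1x : 0 < x i - x (i - 1) := sub_pos.2 (hx (fin_sub_one_lt h1))
    have d2x : 0 < x (i + 1) - x i := sub_pos.2 (hx (fin_lt_add_one h2))
    have d1y : 0 < y i - y (i - 1) := sub_pos.2 (hy (fin_sub_one_lt h1))
    have d2y : 0 < y (i + 1) - y i := sub_pos.2 (hy (fin_lt_add_one h2))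
    have e1 : l * x i + (1 - l) * y i - (l * x (i - 1) + (1 - l) * y (i - 1))
        = l * (x i - x (i - 1)) + (1 - l) * (y i - y (i - 1)) := by ring
    have e2 : l * x (i + 1) + (1 - l) * y (i + 1) - (l * x i + (1 - l) * y i)
        = l * (x (i + 1) - x i) + (1 - l) * (y (i + 1) - y i) := by ring
    simp only [e1, e2]
    exact concave_core' hp hl0 hl1 d1x d2x d1y d2y

lemma strictMono_combo {x y : Fin (n + 2) → ℝ} (hx : StrictMono x) (hy : StrictMono y)
    {l : ℝ} (hl0 : 0 ≤ l) (hl1 : l ≤ 1) :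
    StrictMono (fun j => l * x j + (1 - l) * y j) := by
  intro i j hij
  have h1 := hx hij
  have h2 := hy hij
  simp only
  nlinarith [mul_le_mul_of_nonneg_left (hx hij).le hl0,
    mul_le_mul_of_nonneg_left (hy hij).le (by linarith : (0:ℝ) ≤ 1 - l)]

end fin

/-- let `p > 0`; if `h` is convex and non-increasing on `(0,∞)` and
`V, W : ℝ → ℝ` are convex, then the one-dimensional `p`-approximated discrete energy
`Ẽ_N^p` is convex on the set of strictly increasing configurations `x₁ < ⋯ < x_N`. -/
theorem discreteEnergyP_convex (p : ℝ) (hp : 0 < p) (n : ℕ) (w : Fin (n + 2) → ℝ)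
    (hw : ∀ i, 0 < w i) (hw1 : ∑ i, w i = 1) (h V W : ℝ → ℝ)
    (hconv : ConvexOn ℝ (Set.Ioi (0 : ℝ)) h) (hanti : AntitoneOn h (Set.Ioi (0 : ℝ)))
    (hV : ConvexOn ℝ Set.univ V) (hW : ConvexOn ℝ Set.univ W)
    (x y : Fin (n + 2) → ℝ) (hx : StrictMono x) (hy : StrictMono y)
    (l : ℝ) (hl0 : 0 ≤ l) (hl1 : l ≤ 1) :
    discreteEnergyP p n w h V W (fun i => l * x i + (1 - l) * y i) ≤
      l * discreteEnergyP p n w h V W x + (1 - l) * discreteEnergyP p n w h V W y := by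
  have hl1' : (0:ℝ) ≤ 1 - l := by linarith
  set z : Fin (n + 2) → ℝ := fun i => l * x i + (1 - l) * y i with hz
  have hzmono : StrictMono z := strictMono_combo hx hy hl0 hl1
  have hA : ∑ i, w i * h (rballp p n z i / w i)
      ≤ l * ∑ i, w i * h (rballp p n x i / w i)
        + (1 - l) * ∑ i, w i * h (rballp p n y i / w i) := by
    rw [Finset.mul_sum, Finset.mul_sum, ← Finset.sum_add_distrib]
    refine Finset.sum_le_sum fun i _ => ?_
    have hwi := hw i
    have rx := rballp_pos hp hx i
    have ry := rballp_pos hp hy i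
    have rz := rballp_pos hp hzmono i
    have hcomb := rballp_combo hp hx hy hl0 hl1 i
    rw [← hz] at hcomb
    have hux : (0:ℝ) < rballp p n x i / w i := div_pos rx hwi
    have huy : (0:ℝ) < rballp p n y i / w i := div_pos ry hwi
    have hm : 0 < l * (rballp p n x i / w i) + (1 - l) * (rballp p n y i / w i) :=
      combo_pos hl0 hl1 hux huy
    have hle : l * (rballp p n x i / w i) + (1 - l) * (rballp p n y i / w i)
        ≤ rballp p n z i / w i := by
      have step : (l * rballp p n x i + (1 - l) * rballp p n y i) / w i
          ≤ rballp p n z i / w i := by gcongr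
      calc l * (rballp p n x i / w i) + (1 - l) * (rballp p n y i / w i)
          = (l * rballp p n x i + (1 - l) * rballp p n y i) / w i := by ring
        _ ≤ rballp p n z i / w i := step
    have step1 : h (rballp p n z i / w i)
        ≤ h (l * (rballp p n x i / w i) + (1 - l) * (rballp p n y i / w i)) :=
      hanti (Set.mem_Ioi.2 hm) (Set.mem_Ioi.2 (div_pos rz hwi)) hle
    have step2 : h (l * (rballp p n x i / w i) + (1 - l) * (rballp p n y i / w i))
        ≤ l * h (rballp p n x i / w i) + (1 - l) * h (rballp p n y i / w i) := by
      simpa using hconv.2 (Set.mem_Ioi.2 hux) (Set.mem_Ioi.2 huy) hl0 hl1' (by ring)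
    calc w i * h (rballp p n z i / w i)
        ≤ w i * (l * h (rballp p n x i / w i) + (1 - l) * h (rballp p n y i / w i)) :=
          mul_le_mul_of_nonneg_left (step1.trans step2) hwi.le
      _ = l * (w i * h (rballp p n x i / w i))
          + (1 - l) * (w i * h (rballp p n y i / w i)) := by ring
  have hB : ∑ i, w i * V (z i)
      ≤ l * ∑ i, w i * V (x i) + (1 - l) * ∑ i, w i * V (y i) := by
    rw [Finset.mul_sum, Finset.mul_sum, ← Finset.sum_add_distrib]
    refine Finset.sum_le_sum fun i _ => ?_
    have key : V (z i) ≤ l * V (x i) + (1 - l) * V (y i) := by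
      simpa using hV.2 (Set.mem_univ (x i)) (Set.mem_univ (y i)) hl0 hl1' (by ring)
    calc w i * V (z i) ≤ w i * (l * V (x i) + (1 - l) * V (y i)) :=
          mul_le_mul_of_nonneg_left key (hw i).le
      _ = l * (w i * V (x i)) + (1 - l) * (w i * V (y i)) := by ring
  have hC : ∑ i, ∑ j ∈ Finset.univ.erase i, w i * w j * W (z i - z j)
      ≤ l * ∑ i, ∑ j ∈ Finset.univ.erase i, w i * w j * W (x i - x j)
        + (1 - l) * ∑ i, ∑ j ∈ Finset.univ.erase i, w i * w j * W (y i - y j) := by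
    rw [Finset.mul_sum, Finset.mul_sum, ← Finset.sum_add_distrib]
    refine Finset.sum_le_sum fun i _ => ?_
    rw [Finset.mul_sum, Finset.mul_sum, ← Finset.sum_add_distrib]
    refine Finset.sum_le_sum fun j _ => ?_
    have ez : z i - z j = l * (x i - x j) + (1 - l) * (y i - y j) := by
      simp only [hz]; ring
    have key : W (z i - z j) ≤ l * W (x i - x j) + (1 - l) * W (y i - y j) := by
      rw [ez]
      simpa using hW.2 (Set.mem_univ (x i - x j)) (Set.mem_univ (y i - y j)) hl0 hl1'
        (by ring)
    calc w i * w j * W (z i - z j)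
        ≤ w i * w j * (l * W (x i - x j) + (1 - l) * W (y i - y j)) :=
          mul_le_mul_of_nonneg_left key (mul_pos (hw i) (hw j)).le
      _ = l * (w i * w j * W (x i - x j)) + (1 - l) * (w i * w j * W (y i - y j)) := by
          ring
  simp only [discreteEnergyP]
  linarith
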